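/- Let H be a symmetric positive semidefinite n×n real matrix, let g, x, d ∈ ℝⁿ, μ > 0, and let ζ ∈ ℝⁿ satisfy: ζᵢ = sign(xᵢ) for every i with xᵢ ≠ 0, and for every i with xᵢ = 0, either dᵢ = 0 or ζᵢ = sign(dᵢ) with ζᵢ ∈ {−1, 1}. Define the smooth quadratic model q̄(y) = ⟨g, y − x⟩ + (1/2)⟨y − x, H(y − x)⟩ + μ⟨ζ, y⟩ and the nonsmooth model q(y) = ⟨g, y − x⟩ + (1/2)⟨y − x, H(y − x)⟩ + μ‖y‖₁. If q̄(x + d) ≤ q̄(x), then there exists j ∈ ℕ such that the backtracking projected line search condition holds at step size α = 2^{−j}: q(P(x + 2^{−j} d)) ≤ q(x). In other words, the backtracking projected line search terminates in a finite number of iterations. -/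

import Mathlib

/-- The projection onto the orthant determined by `ζ`: `P(y)ᵢ = yᵢ` if
`sign(yᵢ) = sign(ζᵢ)` and `P(y)ᵢ = 0` otherwise. -/
noncomputable def orthantProj {n : ℕ} (ζ y : Fin n → ℝ) : Fin n → ℝ :=
  fun i => if Real.sign (y i) = Real.sign (ζ i) then y i else 0

/-- finite termination of the backtracking projected line search.
If `H` is symmetric positive semidefinite, `ζ` identifies the orthant face of
`x` and `d` as described, and the smooth model `q̄` satisfies
`q̄(x + d) ≤ q̄(x)`, then for some `j ∈ ℕ` the step size `α = 2^{−j}` satisfies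
`q(P(x + α d)) ≤ q(x)`, where `q` is the nonsmooth model. -/
theorem stmt_12 {n : ℕ} (hn : 0 < n)
    (H : Matrix (Fin n) (Fin n) ℝ) (hH : H.PosSemidef)
    (g x d ζ : Fin n → ℝ) (mu : ℝ) (hmu : 0 < mu)
    (hζ1 : ∀ i, x i ≠ 0 → ζ i = Real.sign (x i))
    (hζ2 : ∀ i, x i = 0 →
      d i = 0 ∨ (ζ i = Real.sign (d i) ∧ (ζ i = -1 ∨ ζ i = 1)))
    (qbar q : (Fin n → ℝ) → ℝ)
    (hqbar : ∀ y, qbar y = (∑ i, g i * (y i - x i))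
      + 1 / 2 * ∑ i, (y i - x i) * (H.mulVec (fun j => y j - x j)) i
      + mu * ∑ i, ζ i * y i)
    (hq : ∀ y, q y = (∑ i, g i * (y i - x i))
      + 1 / 2 * ∑ i, (y i - x i) * (H.mulVec (fun j => y j - x j)) i
      + mu * ∑ i, |y i|)
    (hdec : qbar (x + d) ≤ qbar x) :
    ∃ j : ℕ, q (orthantProj ζ (x + ((1 : ℝ) / 2) ^ j • d)) ≤ q x := by
  classical
  -- choose a safe step size bound
  set f : Fin n → ℝ := fun i => if x i = 0 ∨ d i = 0 then 1 else |x i| / |d i| with hf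
  have hne : (Finset.univ : Finset (Fin n)).Nonempty :=
    Finset.univ_nonempty_iff.mpr (Fin.pos_iff_nonempty.mp hn)
  set ε := Finset.univ.inf' hne f with hεdef
  have hεpos : 0 < ε := by
    rw [hεdef, Finset.lt_inf'_iff]
    intro i _
    simp only [hf]
    split_ifs with h
    · norm_num
    · push_neg at h
      exact div_pos (abs_pos.mpr h.1) (abs_pos.mpr h.2)
  obtain ⟨j, hj⟩ : ∃ j : ℕ, ((1 : ℝ) / 2) ^ j < ε :=
    exists_pow_lt_of_lt_one hεpos (by norm_num)
  refine ⟨j, ?_⟩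
  set α : ℝ := ((1 : ℝ) / 2) ^ j with hα
  have hα0 : 0 < α := pow_pos (by norm_num) j
  have hα1 : α ≤ 1 := pow_le_one₀ (by norm_num) (by norm_num)
  have hsmall : ∀ i, x i ≠ 0 → d i ≠ 0 → α * |d i| < |x i| := by
    intro i hxi hdi
    have h1 : ε ≤ f i := Finset.inf'_le f (Finset.mem_univ i)
    have h2 : α < |x i| / |d i| := by
      have : f i = |x i| / |d i| := by simp [hf, hxi, hdi]
      linarith [hj, h1, this ▸ h1]
    exact (lt_div_iff₀ (abs_pos.mpr hdi)).mp h2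
  -- positivity/negativity of the shifted points
  have hpos : ∀ i, 0 < x i → 0 < x i + α * d i := by
    intro i hxi
    by_cases hdi : d i = 0
    · simpa [hdi] using hxi
    · have h1 := hsmall i (ne_of_gt hxi) hdi
      have h2 : α * d i ≥ -(α * |d i|) := by
        have := neg_abs_le (d i)
        nlinarith
      have : |x i| = x i := abs_of_pos hxi
      nlinarith
  have hneg : ∀ i, x i < 0 → x i + α * d i < 0 := by
    intro i hxi
    by_cases hdi : d i = 0
    · simpa [hdi] using hxi
    · have h1 := hsmall i (ne_of_lt hxi) hdi
      have h2 : α * d i ≤ α * |d i| := by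
        have := le_abs_self (d i)
        nlinarith
      have : |x i| = -x i := abs_of_neg hxi
      nlinarith
  -- the projection is the identity on x + α • d
  have hproj : orthantProj ζ (x + α • d) = x + α • d := by
    funext i
    simp only [orthantProj, Pi.add_apply, Pi.smul_apply, smul_eq_mul]
    by_cases hxi : x i = 0
    · rcases hζ2 i hxi with hdi | ⟨hζd, hζpm⟩
      · simp [hxi, hdi]
      · have hdi : d i ≠ 0 := by
          intro h
          rw [h, Real.sign_zero] at hζd
          rcases hζpm with h' | h' <;> rw [hζd] at h' <;> norm_num at h'
        rw [if_pos]
        rcases lt_or_gt_of_ne hdi with h | h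
        · have h1 : x i + α * d i < 0 := by rw [hxi]; nlinarith
          have h2 : ζ i = -1 := by rw [hζd, Real.sign_of_neg h]
          rw [Real.sign_of_neg h1, h2, Real.sign_of_neg (by norm_num : (-1:ℝ) < 0)]
        · have h1 : 0 < x i + α * d i := by rw [hxi]; nlinarith
          have h2 : ζ i = 1 := by rw [hζd, Real.sign_of_pos h]
          rw [Real.sign_of_pos h1, h2, Real.sign_one]
    · rw [if_pos]
      rcases lt_or_gt_of_ne hxi with h | h
      · rw [Real.sign_of_neg (hneg i h), hζ1 i hxi, Real.sign_of_neg h,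
          Real.sign_of_neg (by norm_num : (-1:ℝ) < 0)]
      · rw [Real.sign_of_pos (hpos i h), hζ1 i hxi, Real.sign_of_pos h, Real.sign_one]
  -- absolute values agree with ζ-weighted values
  have habs_x : ∀ i, |x i| = ζ i * x i := by
    intro i
    by_cases hxi : x i = 0
    · simp [hxi]
    · rcases lt_or_gt_of_ne hxi with h | h
      · rw [abs_of_neg h, hζ1 i hxi, Real.sign_of_neg h]; ring
      · rw [abs_of_pos h, hζ1 i hxi, Real.sign_of_pos h]; ring
  have habs_y : ∀ i, |x i + α * d i| = ζ i * (x i + α * d i) := by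
    intro i
    by_cases hxi : x i = 0
    · rcases hζ2 i hxi with hdi | ⟨hζd, hζpm⟩
      · simp [hxi, hdi]
      · rcases lt_or_gt_of_ne (show d i ≠ 0 by
          intro h
          rw [h, Real.sign_zero] at hζd
          rcases hζpm with h' | h' <;> rw [hζd] at h' <;> norm_num at h') with h | h
        · have h1 : x i + α * d i < 0 := by rw [hxi]; nlinarith
          rw [abs_of_neg h1, hζd, Real.sign_of_neg h]; ring
        · have h1 : 0 < x i + α * d i := by rw [hxi]; nlinarith
          rw [abs_of_pos h1, hζd, Real.sign_of_pos h]; ring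
    · rcases lt_or_gt_of_ne hxi with h | h
      · rw [abs_of_neg (hneg i h), hζ1 i hxi, Real.sign_of_neg h]; ring
      · rw [abs_of_pos (hpos i h), hζ1 i hxi, Real.sign_of_pos h]; ring
  -- rewrite q at both points as qbar
  have hq_x : q x = qbar x := by
    rw [hq, hqbar]
    congr 1
    exact congrArg (fun t => mu * t) (Finset.sum_congr rfl fun i _ => habs_x i)
  have hq_y : q (x + α • d) = qbar (x + α • d) := by
    rw [hq, hqbar]
    congr 1
    refine congrArg (fun t => mu * t) (Finset.sum_congr rfl fun i _ => ?_)
    simp only [Pi.add_apply, Pi.smul_apply, smul_eq_mul]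
    rw [habs_y, mul_add]
  rw [hproj, hq_y, hq_x]
  -- notation for the pieces
  set A : ℝ := ∑ i, g i * d i with hA
  set B : ℝ := ∑ i, d i * (H.mulVec d) i with hB
  set C : ℝ := ∑ i, ζ i * d i with hC
  have hBnn : 0 ≤ B := by
    have := hH.dotProduct_mulVec_nonneg d
    simpa [dotProduct, hB] using this
  have hdsub : (fun j => (x + d) j - x j) = d := by funext j; simp
  have hxsub : (fun j => x j - x j) = (0 : Fin n → ℝ) := by funext j; simp
  have hkey : A + 1 / 2 * B + mu * C ≤ 0 := by
    have h1 := hdec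
    rw [hqbar, hqbar] at h1
    rw [hdsub, hxsub] at h1
    simp only [Pi.add_apply, add_sub_cancel_left, sub_self, Matrix.mulVec_zero,
      Pi.zero_apply, mul_zero, zero_mul, Finset.sum_const_zero, mul_add,
      Finset.sum_add_distrib] at h1
    rw [hA, hB, hC]
    linarith
  have hαsub : (fun j => (x + α • d) j - x j) = α • d := by
    funext j; simp [mul_comm]
  rw [hqbar, hqbar, hαsub, hxsub]
  have hquad : ∑ i, ((x + α • d) i - x i) * (H.mulVec (α • d)) i = α ^ 2 * B := by
    rw [Matrix.mulVec_smul, hB, Finset.mul_sum]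
    refine Finset.sum_congr rfl fun i _ => ?_
    simp only [Pi.add_apply, Pi.smul_apply, smul_eq_mul]
    ring
  have hlin : ∑ i, g i * ((x + α • d) i - x i) = α * A := by
    rw [hA, Finset.mul_sum]
    refine Finset.sum_congr rfl fun i _ => ?_
    simp only [Pi.add_apply, Pi.smul_apply, smul_eq_mul]
    ring
  have hl1 : ∑ i, ζ i * (x + α • d) i = (∑ i, ζ i * x i) + α * C := by
    rw [hC, Finset.mul_sum, ← Finset.sum_add_distrib]
    refine Finset.sum_congr rfl fun i _ => ?_
    simp only [Pi.add_apply, Pi.smul_apply, smul_eq_mul]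
    ring
  rw [hquad, hlin, hl1]
  simp only [sub_self, Matrix.mulVec_zero, Pi.zero_apply, mul_zero, zero_mul,
    Finset.sum_const_zero, mul_zero]
  have hfin : α * A + 1 / 2 * (α ^ 2 * B) + mu * (α * C) ≤ 0 := by
    nlinarith [mul_nonneg hα0.le hBnn, sq_nonneg α, mul_nonneg (mul_nonneg hα0.le hα0.le) hBnn]
  linarith [Finset.sum_congr (rfl : (Finset.univ : Finset (Fin n)) = Finset.univ)
    (fun i _ => rfl : ∀ i ∈ Finset.univ, ζ i * x i = ζ i * x i), hfin, mul_add mu (∑ i, ζ i * x i) (α * C)]
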